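/- The logarithmic robustness equals the maximal advantage ratio: for F a nonempty compact convex set of density matrices containing a positive definite state, and ρ a density matrix, 1 + R(ρ) = max over PSD matrices M ≠ 0 of the ratio Tr[Mρ] / max_{σ∈F} Tr[Mσ]. -/

import Mathlib

open Matrix ComplexOrder

noncomputable section

/-- Trace inner product on matrices: `⟨A, B⟩ = Re Tr[A B]` (real for Hermitian `A`, `B`). -/
def trInner {n : ℕ} (A B : Matrix (Fin n) (Fin n) ℂ) : ℝ := ((A * B).trace).re

/-- A density matrix: positive semidefinite with unit trace. -/
def IsDensity {n : ℕ} (ρ : Matrix (Fin n) (Fin n) ℂ) : Prop := ρ.PosSemidef ∧ ρ.trace = 1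
/-- The feasible set of the generalized robustness program of \`ρ\` relative to \`F\`:
\`λ ≥ 0\` such that \`(ρ + λσ)/(1+λ) ∈ F\` for some density matrix \`σ\`. -/
def robSet {n : ℕ} (F : Set (Matrix (Fin n) (Fin n) ℂ)) (ρ : Matrix (Fin n) (Fin n) ℂ) :
    Set ℝ :=
  {lam | 0 ≤ lam ∧ ∃ σ, IsDensity σ ∧ (1 + lam)⁻¹ • (ρ + lam • σ) ∈ F}
variable {n : ℕ}

theorem Matrix.posSemidef_iff_eq_transpose_mul_self {M : Matrix (Fin n) (Fin n) ℂ} :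
    M.PosSemidef ↔ ∃ C : Matrix (Fin n) (Fin n) ℂ, M = Cᴴ * C := by
  open scoped MatrixOrder Matrix.Norms.L2Operator in
  constructor
  · intro hM
    obtain ⟨B, hB⟩ := CStarAlgebra.nonneg_iff_eq_star_mul_self.mp hM.nonneg
    exact ⟨B, hB⟩
  · rintro ⟨C, rfl⟩
    exact Matrix.posSemidef_conjTranspose_mul_self C

lemma trInner_add_right (M A B : Matrix (Fin n) (Fin n) ℂ) :
    trInner M (A + B) = trInner M A + trInner M B := by
  simp [trInner, Matrix.mul_add, Matrix.trace_add]

lemma trInner_smul_right (M A : Matrix (Fin n) (Fin n) ℂ) (c : ℝ) :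
    trInner M (c • A) = c * trInner M A := by
  simp [trInner, Matrix.mul_smul, Matrix.trace_smul, Complex.real_smul]

lemma trInner_add_left (M N A : Matrix (Fin n) (Fin n) ℂ) :
    trInner (M + N) A = trInner M A + trInner N A := by
  simp [trInner, Matrix.add_mul, Matrix.trace_add]

lemma trInner_sub_left (M N A : Matrix (Fin n) (Fin n) ℂ) :
    trInner (M - N) A = trInner M A - trInner N A := by
  simp [trInner, Matrix.sub_mul, Matrix.trace_sub]

lemma trInner_smul_left (M A : Matrix (Fin n) (Fin n) ℂ) (c : ℝ) :
    trInner (c • M) A = c * trInner M A := by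
  simp [trInner, Matrix.smul_mul, Matrix.trace_smul, Complex.real_smul]

lemma trInner_smul_one (A : Matrix (Fin n) (Fin n) ℂ) (c : ℝ) :
    trInner ((c : ℂ) • 1) A = c * (A.trace).re := by
  simp [trInner, Matrix.smul_mul, Matrix.trace_smul, Complex.real_smul]

lemma re_trace_conjTranspose_mul_self (X : Matrix (Fin n) (Fin n) ℂ) :
    ((Xᴴ * X).trace).re = ∑ i, ∑ j, Complex.normSq (X j i) := by
  simp only [Matrix.trace, Matrix.diag, Matrix.mul_apply, Matrix.conjTranspose_apply]
  rw [Complex.re_sum]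
  congr 1; ext i
  rw [Complex.re_sum]
  congr 1; ext j
  simp [Complex.star_def, ← Complex.normSq_eq_conj_mul_self]

lemma trInner_nonneg {M A : Matrix (Fin n) (Fin n) ℂ} (hM : M.PosSemidef) (hA : A.PosSemidef) :
    0 ≤ trInner M A := by
  obtain ⟨C, rfl⟩ := (Matrix.posSemidef_iff_eq_transpose_mul_self).mp hM
  obtain ⟨D, rfl⟩ := (Matrix.posSemidef_iff_eq_transpose_mul_self).mp hA
  have key : ((C * Dᴴ)ᴴ * (C * Dᴴ)).trace = (Cᴴ * C * (Dᴴ * D)).trace := by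
    rw [show (C * Dᴴ)ᴴ * (C * Dᴴ) = D * (Cᴴ * C * Dᴴ) by
      simp [Matrix.conjTranspose_mul, Matrix.mul_assoc]]
    rw [Matrix.trace_mul_comm, Matrix.mul_assoc]
  have : trInner (Cᴴ * C) (Dᴴ * D) = (((C * Dᴴ)ᴴ * (C * Dᴴ)).trace).re := by
    unfold trInner; rw [key]
  rw [this, re_trace_conjTranspose_mul_self]
  exact Finset.sum_nonneg fun i _ => Finset.sum_nonneg fun j _ => Complex.normSq_nonneg _

lemma trInner_sub_right (M A B : Matrix (Fin n) (Fin n) ℂ) :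
    trInner M (A - B) = trInner M A - trInner M B := by
  simp [trInner, Matrix.mul_sub, Matrix.trace_sub]

lemma trInner_smul_one_right (M : Matrix (Fin n) (Fin n) ℂ) (c : ℝ) :
    trInner M ((c : ℂ) • 1) = c * (M.trace).re := by
  simp [trInner, Matrix.mul_smul, Matrix.trace_smul, Complex.real_smul]

lemma psd_re_trace_nonneg {M : Matrix (Fin n) (Fin n) ℂ} (hM : M.PosSemidef) :
    0 ≤ (M.trace).re := by
  obtain ⟨C, rfl⟩ := (Matrix.posSemidef_iff_eq_transpose_mul_self).mp hM
  rw [re_trace_conjTranspose_mul_self]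
  exact Finset.sum_nonneg fun i _ => Finset.sum_nonneg fun j _ => Complex.normSq_nonneg _

lemma psd_eq_zero_of_re_trace_eq_zero {M : Matrix (Fin n) (Fin n) ℂ} (hM : M.PosSemidef)
    (h : (M.trace).re = 0) : M = 0 := by
  obtain ⟨C, rfl⟩ := (Matrix.posSemidef_iff_eq_transpose_mul_self).mp hM
  rw [re_trace_conjTranspose_mul_self] at h
  have hC : C = 0 := by
    ext j i
    have h1 : ∀ i ∈ Finset.univ, (0:ℝ) ≤ ∑ j, Complex.normSq (C j i) :=
      fun i _ => Finset.sum_nonneg fun j _ => Complex.normSq_nonneg _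
    have h2 := (Finset.sum_eq_zero_iff_of_nonneg h1).mp h i (Finset.mem_univ i)
    have h3 := (Finset.sum_eq_zero_iff_of_nonneg
      (fun j _ => Complex.normSq_nonneg (C j i))).mp h2 j (Finset.mem_univ j)
    simpa using Complex.normSq_eq_zero.mp h3
  rw [hC]; simp

lemma shift_posSemidef {A : Matrix (Fin n) (Fin n) ℂ} (hA : A.IsHermitian) (c : ℝ)
    (h : ∀ i, c ≤ hA.eigenvalues i) : (A - (c : ℂ) • 1).PosSemidef := by
  classical
  set U : Matrix (Fin n) (Fin n) ℂ := (hA.eigenvectorUnitary : Matrix (Fin n) (Fin n) ℂ)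
  have hU : U * star U = 1 := (Matrix.mem_unitaryGroup_iff).mp (hA.eigenvectorUnitary).2
  have hdiag : ((Matrix.diagonal fun i => ((hA.eigenvalues i - c : ℝ) : ℂ))).PosSemidef := by
    refine Matrix.PosSemidef.diagonal fun i => ?_
    have hci : (0:ℝ) ≤ hA.eigenvalues i - c := by linarith [h i]
    simpa using Complex.zero_le_real.mpr hci
  have key : A - (c : ℂ) • 1
      = U * (Matrix.diagonal fun i => ((hA.eigenvalues i - c : ℝ) : ℂ)) * Uᴴ := by
    have hspec := hA.spectral_theorem
    rw [Unitary.conjStarAlgAut_apply] at hspec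
    have : (Matrix.diagonal fun i => ((hA.eigenvalues i - c : ℝ) : ℂ))
        = Matrix.diagonal (RCLike.ofReal ∘ hA.eigenvalues) - (c : ℂ) • 1 := by
      ext i j
      rcases eq_or_ne i j with rfl | hij
      · simp [Matrix.sub_apply, Matrix.smul_apply, Matrix.one_apply_eq,
          Matrix.diagonal_apply_eq, Function.comp]
      · simp [Matrix.sub_apply, Matrix.smul_apply, Matrix.one_apply_ne hij,
          Matrix.diagonal_apply_ne _ hij]
    rw [this, Matrix.mul_sub, Matrix.sub_mul]
    rw [← Matrix.star_eq_conjTranspose]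
    rw [← hspec]
    congr 1
    rw [Matrix.mul_smul, Matrix.mul_one, Matrix.smul_mul, hU]
  rw [key]
  exact hdiag.mul_mul_conjTranspose_same U

lemma eig_density {A : Matrix (Fin n) (Fin n) ℂ} (hA : A.IsHermitian) (j : Fin n) :
    ∃ σ, IsDensity σ ∧ trInner A σ = hA.eigenvalues j := by
  classical
  set v : Fin n → ℂ := ⇑(hA.eigenvectorBasis j) with hv
  have hnorm : ∑ i, Complex.normSq (v i) = 1 := by
    have h1 : ‖hA.eigenvectorBasis j‖ = 1 := (hA.eigenvectorBasis).orthonormal.1 j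
    have h2 := EuclideanSpace.norm_eq (hA.eigenvectorBasis j)
    rw [h1] at h2
    have h4 : (0:ℝ) ≤ ∑ i, ‖(hA.eigenvectorBasis j) i‖ ^ 2 :=
      Finset.sum_nonneg fun i _ => sq_nonneg _
    have h3 : (1:ℝ) = ∑ i, ‖(hA.eigenvectorBasis j) i‖ ^ 2 := by
      rw [← Real.sq_sqrt h4, ← h2]; norm_num
    rw [h3]
    refine Finset.sum_congr rfl fun i _ => ?_
    have hvi : v i = hA.eigenvectorBasis j i := rfl
    rw [hvi]
    simp [Complex.normSq_eq_norm_sq]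
  have hsum : ∑ i, v i * (starRingEnd ℂ) (v i) = 1 := by
    have : ∀ i, v i * (starRingEnd ℂ) (v i) = (Complex.normSq (v i) : ℂ) := fun i =>
      Complex.mul_conj _
    simp only [this]
    rw [← Complex.ofReal_sum, hnorm, Complex.ofReal_one]
  refine ⟨Matrix.vecMulVec v (star v), ⟨Matrix.PosSemidef.of_dotProduct_mulVec_nonneg ?_ ?_, ?_⟩, ?_⟩
  · ext i k
    simp [Matrix.conjTranspose_apply, Matrix.vecMulVec_apply, Pi.star_apply, mul_comm]
  · intro x
    have hstar : star (∑ i, (starRingEnd ℂ) (v i) * x i)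
        = ∑ i, v i * (starRingEnd ℂ) (x i) := by
      rw [star_sum]
      refine Finset.sum_congr rfl fun i _ => ?_
      rw [star_mul']
      simp [RCLike.star_def, mul_comm]
    have hexp : dotProduct (star x) (Matrix.vecMulVec v (star v) *ᵥ x)
        = star (∑ i, (starRingEnd ℂ) (v i) * x i) * (∑ i, (starRingEnd ℂ) (v i) * x i) := by
      rw [hstar, Finset.sum_mul_sum]
      simp only [dotProduct, Matrix.mulVec, Matrix.vecMulVec_apply, Pi.star_apply,
        RCLike.star_def, Finset.mul_sum]
      refine Finset.sum_congr rfl fun i _ => Finset.sum_congr rfl fun k _ => by ring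
    rw [hexp]
    exact star_mul_self_nonneg _
  · simp only [Matrix.trace, Matrix.diag, Matrix.vecMulVec_apply, Pi.star_apply,
      RCLike.star_def]
    exact hsum
  · have h1 : (A * Matrix.vecMulVec v (star v)).trace
        = ∑ i, (A *ᵥ v) i * (starRingEnd ℂ) (v i) := by
      simp only [Matrix.trace, Matrix.diag, Matrix.mul_apply, Matrix.vecMulVec_apply,
        Pi.star_apply, RCLike.star_def, Matrix.mulVec, dotProduct, Finset.sum_mul]
      refine Finset.sum_congr rfl fun i _ => Finset.sum_congr rfl fun k _ => by ring
    have h2 : A *ᵥ v = hA.eigenvalues j • v := by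
      rw [hv]; exact hA.mulVec_eigenvectorBasis j
    rw [trInner, h1, h2]
    simp only [Pi.smul_apply, Complex.real_smul]
    rw [show ∑ i, (hA.eigenvalues j : ℂ) * v i * (starRingEnd ℂ) (v i)
        = (hA.eigenvalues j : ℂ) * ∑ i, v i * (starRingEnd ℂ) (v i) by
      rw [Finset.mul_sum]; exact Finset.sum_congr rfl fun i _ => by ring]
    rw [hsum, mul_one, Complex.ofReal_re]

lemma trInner_pos {M τ : Matrix (Fin n) (Fin n) ℂ} (hM : M.PosSemidef) (hMne : M ≠ 0)
    (hτ : τ.PosDef) : 0 < trInner M τ := by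
  rcases Nat.eq_zero_or_pos n with hn | hn
  · subst hn
    exact absurd (by ext i j; exact i.elim0) hMne
  · have : Nonempty (Fin n) := ⟨⟨0, hn⟩⟩
    obtain ⟨j, -, hj⟩ := Finset.exists_min_image Finset.univ (hτ.1.eigenvalues)
      ⟨Classical.arbitrary (Fin n), Finset.mem_univ _⟩
    set c := hτ.1.eigenvalues j with hc
    have hcpos : 0 < c := hτ.eigenvalues_pos j
    have hshift : (τ - (c : ℂ) • 1).PosSemidef :=
      shift_posSemidef hτ.1 c fun i => hj i (Finset.mem_univ i)
    have htr : 0 < (M.trace).re := by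
      rcases lt_or_eq_of_le (psd_re_trace_nonneg hM) with h | h
      · exact h
      · exact absurd (psd_eq_zero_of_re_trace_eq_zero hM h.symm) hMne
    have hsplit : trInner M τ = trInner M (τ - (c : ℂ) • 1) + c * (M.trace).re := by
      rw [trInner_sub_right, trInner_smul_one_right]; ring
    have h1 : 0 ≤ trInner M (τ - (c : ℂ) • 1) := trInner_nonneg hM hshift
    nlinarith

lemma trInner_eq_sum (M X : Matrix (Fin n) (Fin n) ℂ) :
    trInner M X = ∑ i, ∑ j, (M i j * X j i).re := by
  simp only [trInner, Matrix.trace, Matrix.diag, Matrix.mul_apply, Complex.re_sum]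

lemma continuous_trInner_right (M : Matrix (Fin n) (Fin n) ℂ) :
    Continuous fun X : Matrix (Fin n) (Fin n) ℂ => trInner M X := by
  simp only [trInner_eq_sum]
  refine continuous_finset_sum _ fun i _ => continuous_finset_sum _ fun j _ => ?_
  exact Complex.continuous_re.comp (continuous_const.mul (continuous_id.matrix_elem j i))

lemma continuous_trInner_left (X : Matrix (Fin n) (Fin n) ℂ) :
    Continuous fun M : Matrix (Fin n) (Fin n) ℂ => trInner M X := by
  simp only [trInner_eq_sum]
  refine continuous_finset_sum _ fun i _ => continuous_finset_sum _ fun j _ => ?_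
  exact Complex.continuous_re.comp ((continuous_id.matrix_elem i j).mul continuous_const)

lemma isClosed_nonnegC : IsClosed {z : ℂ | 0 ≤ z} := by
  have : {z : ℂ | 0 ≤ z} = {z : ℂ | 0 ≤ z.re} ∩ {z : ℂ | z.im = 0} := by
    ext z
    simp only [Set.mem_setOf_eq, Set.mem_inter_iff, Complex.le_def, Complex.zero_re,
      Complex.zero_im]
    tauto
  rw [this]
  exact (isClosed_le continuous_const Complex.continuous_re).inter
    (isClosed_eq Complex.continuous_im continuous_const)

lemma isClosed_posSemidef : IsClosed {M : Matrix (Fin n) (Fin n) ℂ | M.PosSemidef} := by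
  have h1 : IsClosed {M : Matrix (Fin n) (Fin n) ℂ | M.IsHermitian} := by
    refine isClosed_eq ?_ continuous_id
    exact continuous_matrix fun i j => Continuous.star (continuous_id.matrix_elem j i)
  have h2 : ∀ x : Fin n → ℂ,
      IsClosed {M : Matrix (Fin n) (Fin n) ℂ | 0 ≤ dotProduct (star x) (M *ᵥ x)} := by
    intro x
    refine IsClosed.preimage ?_ isClosed_nonnegC
    exact (continuous_const.dotProduct (continuous_id.matrix_mulVec continuous_const))
  have : {M : Matrix (Fin n) (Fin n) ℂ | M.PosSemidef}
      = {M : Matrix (Fin n) (Fin n) ℂ | M.IsHermitian}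
        ∩ ⋂ x : Fin n → ℂ, {M | 0 ≤ dotProduct (star x) (M *ᵥ x)} := by
    ext M
    simp only [Set.mem_setOf_eq, Set.mem_inter_iff, Set.mem_iInter, Matrix.posSemidef_iff_dotProduct_mulVec]
  rw [this]
  exact h1.inter (isClosed_iInter h2)

lemma isClosed_density : IsClosed {σ : Matrix (Fin n) (Fin n) ℂ | IsDensity σ} := by
  have h1 : IsClosed {σ : Matrix (Fin n) (Fin n) ℂ | σ.trace = 1} :=
    isClosed_eq (continuous_id.matrix_trace) continuous_const
  have : {σ : Matrix (Fin n) (Fin n) ℂ | IsDensity σ}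
      = {σ : Matrix (Fin n) (Fin n) ℂ | σ.PosSemidef}
        ∩ {σ : Matrix (Fin n) (Fin n) ℂ | σ.trace = 1} := rfl
  rw [this]
  exact isClosed_posSemidef.inter h1

lemma psd_entry_bound {M : Matrix (Fin n) (Fin n) ℂ} (hM : M.PosSemidef)
    (htr : (M.trace).re ≤ 1) (i j : Fin n) : ‖M i j‖ ≤ 1 := by
  obtain ⟨C, rfl⟩ := (Matrix.posSemidef_iff_eq_transpose_mul_self).mp hM
  rw [re_trace_conjTranspose_mul_self] at htr
  have hcol : ∀ p : Fin n, ∑ k, Complex.normSq (C k p) ≤ 1 := by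
    intro p
    calc ∑ k, Complex.normSq (C k p)
        ≤ ∑ p', ∑ k, Complex.normSq (C k p') :=
          Finset.single_le_sum (f := fun p' => ∑ k, Complex.normSq (C k p'))
            (fun p' _ => Finset.sum_nonneg fun k _ => Complex.normSq_nonneg _)
            (Finset.mem_univ p)
      _ ≤ 1 := htr
  set u : EuclideanSpace ℂ (Fin n) := (WithLp.equiv 2 _).symm (fun k => C k i) with hu'
  set w : EuclideanSpace ℂ (Fin n) := (WithLp.equiv 2 _).symm (fun k => C k j) with hw'
  have hnorm : ∀ (p : Fin n) (z : EuclideanSpace ℂ (Fin n)),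
      (∀ k, z k = C k p) → ‖z‖ ≤ 1 := by
    intro p z hz
    rw [EuclideanSpace.norm_eq]
    refine Real.sqrt_le_one.mpr ?_
    calc ∑ k, ‖z k‖ ^ 2 = ∑ k, Complex.normSq (C k p) := by
          refine Finset.sum_congr rfl fun k _ => ?_
          rw [hz k]
          simp [Complex.normSq_eq_norm_sq]
      _ ≤ 1 := hcol p
  have hinner : (inner ℂ u w : ℂ) = (Cᴴ * C) i j := by
    simp only [PiLp.inner_apply, RCLike.inner_apply, Matrix.mul_apply,
      Matrix.conjTranspose_apply, RCLike.star_def]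
    exact Finset.sum_congr rfl fun k _ => mul_comm _ _
  calc ‖(Cᴴ * C) i j‖ = ‖(inner ℂ u w : ℂ)‖ := by
        rw [hinner]
    _ ≤ ‖u‖ * ‖w‖ := norm_inner_le_norm u w
    _ ≤ 1 * 1 := by
        exact mul_le_mul (hnorm i u fun k => rfl) (hnorm j w fun k => rfl)
          (norm_nonneg w) (by linarith [hnorm i u fun k => rfl, norm_nonneg u])
    _ = 1 := by ring

lemma isHermitian_smul_real {A : Matrix (Fin n) (Fin n) ℂ} (hA : A.IsHermitian) (a : ℝ) :
    (a • A).IsHermitian := by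
  ext i j
  have h := congrFun (congrFun hA i) j
  simp only [Matrix.conjTranspose_apply, Matrix.smul_apply] at h ⊢
  rw [Complex.real_smul, Complex.real_smul, star_mul', RCLike.star_def, Complex.conj_ofReal,
    mul_comm]
  rw [show (starRingEnd ℂ) (A j i) = A i j from h]
  ring

lemma posSemidef_smul_real {M : Matrix (Fin n) (Fin n) ℂ} (hM : M.PosSemidef) {a : ℝ}
    (ha : 0 ≤ a) : (a • M).PosSemidef := by
  refine Matrix.PosSemidef.of_dotProduct_mulVec_nonneg (isHermitian_smul_real hM.1 a) fun x => ?_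
  rw [Matrix.smul_mulVec, dotProduct_smul]
  have h0 := hM.dotProduct_mulVec_nonneg x
  rw [show (a • dotProduct (star x) (M *ᵥ x))
      = (a:ℂ) * dotProduct (star x) (M *ᵥ x) from Complex.real_smul]
  exact mul_nonneg (Complex.zero_le_real.mpr ha) h0

lemma convex_density : Convex ℝ {σ : Matrix (Fin n) (Fin n) ℂ | IsDensity σ} := by
  rintro σ ⟨hσp, hσt⟩ τ ⟨hτp, hτt⟩ a b ha hb hab
  refine ⟨(posSemidef_smul_real hσp ha).add (posSemidef_smul_real hτp hb), ?_⟩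
  rw [Matrix.trace_add, Matrix.trace_smul, Matrix.trace_smul, hσt, hτt]
  have : (a:ℂ) + (b:ℂ) = 1 := by exact_mod_cast congrArg Complex.ofReal hab
  simpa [Complex.real_smul] using this

lemma isCompact_psd_trace_le_one :
    IsCompact {M : Matrix (Fin n) (Fin n) ℂ | M.PosSemidef ∧ (M.trace).re ≤ 1} := by
  have hball : IsCompact {A : Matrix (Fin n) (Fin n) ℂ | ∀ i j, A i j ∈ Metric.closedBall (0:ℂ) 1} := by
    have h1 : IsCompact (Set.pi (Set.univ : Set (Fin n))
        fun _ => Set.pi Set.univ fun _ : Fin n => Metric.closedBall (0:ℂ) 1) :=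
      isCompact_univ_pi fun i => isCompact_univ_pi fun j => isCompact_closedBall 0 1
    have hc : Continuous (Matrix.of : (Fin n → Fin n → ℂ) → Matrix (Fin n) (Fin n) ℂ) :=
      continuous_matrix fun i j => (continuous_apply j).comp (continuous_apply i)
    have h2 := h1.image hc
    have h3 : {A : Matrix (Fin n) (Fin n) ℂ | ∀ i j, A i j ∈ Metric.closedBall (0:ℂ) 1}
        = Matrix.of '' (Set.pi (Set.univ : Set (Fin n))
            fun _ => Set.pi Set.univ fun _ : Fin n => Metric.closedBall (0:ℂ) 1) := by
      ext A
      constructor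
      · intro h
        exact ⟨Matrix.of.symm A, fun i _ j _ => h i j, rfl⟩
      · rintro ⟨f, hf, rfl⟩ i j
        exact hf i (Set.mem_univ i) j (Set.mem_univ j)
    rw [h3]; exact h2
  refine IsCompact.of_isClosed_subset hball ?_ ?_
  · exact isClosed_posSemidef.inter
      (isClosed_le (Complex.continuous_re.comp (continuous_id.matrix_trace)) continuous_const)
  · rintro M ⟨hMp, hMt⟩ 
    intro i j
    rw [Metric.mem_closedBall, dist_zero_right]
    exact psd_entry_bound hMp hMt i j

lemma isCompact_density : IsCompact {σ : Matrix (Fin n) (Fin n) ℂ | IsDensity σ} := by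
  refine IsCompact.of_isClosed_subset isCompact_psd_trace_le_one isClosed_density ?_
  rintro σ ⟨hσp, hσt⟩
  exact ⟨hσp, by rw [hσt]; norm_num⟩

lemma trInner_conjTranspose_of_hermitian (Mraw X : Matrix (Fin n) (Fin n) ℂ)
    (hX : X.IsHermitian) : trInner Mrawᴴ X = trInner Mraw X := by
  unfold trInner
  have h1 : Mrawᴴ * X = (Xᴴ * Mraw)ᴴ := by
    rw [Matrix.conjTranspose_mul, Matrix.conjTranspose_conjTranspose]
  rw [h1, Matrix.trace_conjTranspose, hX, Matrix.trace_mul_comm]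
  exact Complex.conj_re _

lemma f_rep (f : Matrix (Fin n) (Fin n) ℂ →L[ℝ] ℝ) :
    ∃ M₀ : Matrix (Fin n) (Fin n) ℂ, M₀.IsHermitian ∧
      ∀ X : Matrix (Fin n) (Fin n) ℂ, X.IsHermitian → trInner M₀ X = f X := by
  classical
  set E : Fin n → Fin n → Matrix (Fin n) (Fin n) ℂ :=
    fun p q => Matrix.single p q (1:ℂ) with hE
  set c : Fin n → Fin n → ℂ := fun p q =>
    ((f (E p q) : ℝ) : ℂ) + ((f (Complex.I • E p q) : ℝ) : ℂ) * Complex.I with hc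
  set Mraw : Matrix (Fin n) (Fin n) ℂ := Matrix.of fun i j => star (c j i) with hMraw
  have hcre : ∀ p q, (c p q).re = f (E p q) := by intro p q; simp [hc]
  have hcim : ∀ p q, (c p q).im = f (Complex.I • E p q) := by intro p q; simp [hc]
  have hsplit : ∀ (p q : Fin n) (z : ℂ),
      Matrix.single p q z = z.re • E p q + z.im • (Complex.I • E p q) := by
    intro p q z
    ext a b
    simp only [hE, Matrix.single, Matrix.add_apply, Matrix.smul_apply, Matrix.of_apply,
      smul_eq_mul, Complex.real_smul]
    by_cases hab : p = a ∧ q = b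
    · simp [hab]
      try rw [mul_comm Complex.I]
      try exact (Complex.re_add_im z).symm
    · simp [hab]
  have hfstd : ∀ (p q : Fin n) (z : ℂ),
      f (Matrix.single p q z) = z.re * f (E p q) + z.im * f (Complex.I • E p q) := by
    intro p q z
    rw [hsplit p q z, f.map_add, f.map_smul, f.map_smul]
    simp [smul_eq_mul]
  have hA : ∀ X, trInner Mraw X = f X := by
    intro X
    have hfX : f X = ∑ p, ∑ q,
        ((X p q).re * f (E p q) + (X p q).im * f (Complex.I • E p q)) := by
      conv_lhs => rw [Matrix.matrix_eq_sum_single X]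
      rw [map_sum]
      refine Finset.sum_congr rfl fun p _ => ?_
      rw [map_sum]
      exact Finset.sum_congr rfl fun q _ => hfstd p q (X p q)
    rw [hfX, trInner_eq_sum]
    rw [Finset.sum_comm]
    refine Finset.sum_congr rfl fun p _ => Finset.sum_congr rfl fun q _ => ?_
    have hM : Mraw q p = star (c p q) := rfl
    rw [hM]
    rw [show (star (c p q) * X p q).re
        = (c p q).re * (X p q).re + (c p q).im * (X p q).im by
      simp [Complex.mul_re, RCLike.star_def]; try ring]
    rw [hcre, hcim]
    ring
  refine ⟨(1/2 : ℝ) • (Mraw + Mrawᴴ), ?_, ?_⟩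
  · refine isHermitian_smul_real ?_ _
    ext i j
    simp only [Matrix.conjTranspose_apply, Matrix.add_apply, star_add, star_star]
    ring
  · intro X hX
    rw [trInner_smul_left, trInner_add_left, trInner_conjTranspose_of_hermitian _ _ hX, hA]
    ring

instance locallyConvexMat (n : ℕ) : LocallyConvexSpace ℝ (Matrix (Fin n) (Fin n) ℂ) :=
  inferInstanceAs (LocallyConvexSpace ℝ (Fin n → Fin n → ℂ))

lemma sep_step {F : Set (Matrix (Fin n) (Fin n) ℂ)} (hne : F.Nonempty)
    (hcomp : IsCompact F) (hconv : Convex ℝ F) (hF : ∀ τ ∈ F, IsDensity τ)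
    {ρ : Matrix (Fin n) (Fin n) ℂ} (hρ : IsDensity ρ) (hn : 0 < n) {t : ℝ}
    (hnotin : ρ ∉ (fun p : Matrix (Fin n) (Fin n) ℂ × Matrix (Fin n) (Fin n) ℂ =>
      (1+t) • p.1 - t • p.2) '' (F ×ˢ {σ | IsDensity σ})) :
    ∃ M : Matrix (Fin n) (Fin n) ℂ, M.PosSemidef ∧ (M.trace).re = 1 ∧
      ∀ τ ∈ F, (1 + t) * trInner M τ ≤ trInner M ρ := by
  classical
  have : Nonempty (Fin n) := ⟨⟨0, hn⟩⟩
  set C : Set (Matrix (Fin n) (Fin n) ℂ) :=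
    (fun p : Matrix (Fin n) (Fin n) ℂ × Matrix (Fin n) (Fin n) ℂ =>
      (1+t) • p.1 - t • p.2) '' (F ×ˢ {σ | IsDensity σ}) with hC
  have hCc : IsCompact C := by
    refine (hcomp.prod isCompact_density).image ?_
    exact (continuous_fst.const_smul (1+t)).sub (continuous_snd.const_smul t)
  have hCclosed : IsClosed C := hCc.isClosed
  have hCconv : Convex ℝ C := by
    have hlin := Convex.linear_image (hconv.prod convex_density)
      (((1+t) • LinearMap.fst ℝ (Matrix (Fin n) (Fin n) ℂ) (Matrix (Fin n) (Fin n) ℂ))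
        - (t • LinearMap.snd ℝ (Matrix (Fin n) (Fin n) ℂ) (Matrix (Fin n) (Fin n) ℂ)))
    convert hlin using 2
    · rfl
    · simp
  obtain ⟨f, u, hfa, hfρ⟩ := geometric_hahn_banach_closed_point hCconv hCclosed hnotin
  obtain ⟨M₀, hM₀h, hM₀⟩ := f_rep f
  have hsep : ∀ τ ∈ F, ∀ σ : Matrix (Fin n) (Fin n) ℂ, IsDensity σ →
      (1+t) * trInner M₀ τ - t * trInner M₀ σ < trInner M₀ ρ := by
    intro τ hτ σ hσ
    have helem : ((1+t) • τ - t • σ) ∈ C := ⟨⟨τ, σ⟩, ⟨hτ, hσ⟩, rfl⟩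
    have hherm : ((1+t) • τ - t • σ).IsHermitian :=
      (isHermitian_smul_real (hF τ hτ).1.1 _).sub (isHermitian_smul_real hσ.1.1 _)
    have h1 := hfa _ helem
    rw [← hM₀ _ hherm] at h1
    rw [← hM₀ ρ hρ.1.1] at hfρ
    rw [trInner_sub_right, trInner_smul_right, trInner_smul_right] at h1
    linarith
  obtain ⟨j, -, hj⟩ := Finset.exists_min_image Finset.univ hM₀h.eigenvalues
    ⟨Classical.arbitrary (Fin n), Finset.mem_univ _⟩
  set μ := hM₀h.eigenvalues j with hμ
  obtain ⟨σs, hσs, hσstr⟩ := eig_density hM₀h j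
  set M₁ := M₀ - (μ : ℂ) • 1 with hM₁
  have hM₁psd : M₁.PosSemidef := shift_posSemidef hM₀h μ fun i => hj i (Finset.mem_univ i)
  have hkey : ∀ X : Matrix (Fin n) (Fin n) ℂ, X.trace = 1 →
      trInner M₀ X = trInner M₁ X + μ := by
    intro X hX
    rw [hM₁, trInner_sub_left, trInner_smul_one, hX]
    simp
  have hineq : ∀ τ ∈ F, (1+t) * trInner M₁ τ < trInner M₁ ρ := by
    intro τ hτ
    have h1 := hsep τ hτ σs hσs
    rw [hσstr] at h1
    rw [hkey τ (hF τ hτ).2, hkey ρ hρ.2] at h1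
    nlinarith
  have hM₁ne : M₁ ≠ 0 := by
    intro h0
    obtain ⟨τ, hτ⟩ := hne
    have := hineq τ hτ
    rw [h0] at this
    simp [trInner] at this
  have ha : 0 < (M₁.trace).re := by
    rcases lt_or_eq_of_le (psd_re_trace_nonneg hM₁psd) with h | h
    · exact h
    · exact absurd (psd_eq_zero_of_re_trace_eq_zero hM₁psd h.symm) hM₁ne
  set a := (M₁.trace).re with hadef
  refine ⟨a⁻¹ • M₁, posSemidef_smul_real hM₁psd (by positivity), ?_, ?_⟩
  · rw [Matrix.trace_smul]
    rw [show (a⁻¹ • M₁.trace) = ((a⁻¹ : ℝ) : ℂ) * M₁.trace from Complex.real_smul]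
    rw [Complex.mul_re]
    simp [Complex.ofReal_re, Complex.ofReal_im]
    field_simp
    exact hadef.symm
  · intro τ hτ
    rw [trInner_smul_left, trInner_smul_left]
    have h1 := (hineq τ hτ).le
    have h2 : 0 ≤ a⁻¹ := by positivity
    calc (1+t) * (a⁻¹ * trInner M₁ τ) = a⁻¹ * ((1+t) * trInner M₁ τ) := by ring
      _ ≤ a⁻¹ * trInner M₁ ρ := by exact mul_le_mul_of_nonneg_left h1 h2


/-- The robustness equals the maximal advantage ratio: for `F` containing a positive definite
state, `1 + R(ρ) = max_{M PSD, M ≠ 0} Tr[Mρ] / max_{σ∈F} Tr[Mσ]`, the maximum attained. -/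
theorem robustness_eq_max_advantage (n : ℕ) (F : Set (Matrix (Fin n) (Fin n) ℂ))
    (hne : F.Nonempty) (hcomp : IsCompact F) (hconv : Convex ℝ F)
    (hF : ∀ τ ∈ F, IsDensity τ) (hfull : ∃ τ ∈ F, τ.PosDef)
    (ρ : Matrix (Fin n) (Fin n) ℂ) (hρ : IsDensity ρ)
    (r : ℝ) (hr : IsLeast (robSet F ρ) r) :
    IsGreatest {x : ℝ | ∃ M : Matrix (Fin n) (Fin n) ℂ, M.PosSemidef ∧ M ≠ 0 ∧
        x = trInner M ρ / sSup {y : ℝ | ∃ σ ∈ F, y = trInner M σ}} (1 + r) := by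

  classical
  rcases Nat.eq_zero_or_pos n with hn | hn
  · exfalso
    subst hn
    have := hρ.2
    simp [Matrix.trace] at this
  obtain ⟨hr0, σ₁, hσ₁, hτ₁F⟩ := hr.1
  have h1r : (0:ℝ) < 1 + r := by linarith
  have hYb : ∀ M : Matrix (Fin n) (Fin n) ℂ,
      BddAbove {y : ℝ | ∃ σ ∈ F, y = trInner M σ} := by
    intro M
    have hset : {y : ℝ | ∃ σ ∈ F, y = trInner M σ} = (fun σ => trInner M σ) '' F := by
      ext y
      constructor
      · rintro ⟨σ, hσ, rfl⟩; exact ⟨σ, hσ, rfl⟩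
      · rintro ⟨σ, hσ, rfl⟩; exact ⟨σ, hσ, rfl⟩
    rw [hset]
    exact (hcomp.image (continuous_trInner_right M)).bddAbove
  obtain ⟨τ₀, hτ₀F, hτ₀pd⟩ := hfull
  have hspos : ∀ M : Matrix (Fin n) (Fin n) ℂ, M.PosSemidef → M ≠ 0 →
      0 < sSup {y : ℝ | ∃ σ ∈ F, y = trInner M σ} := by
    intro M hpsd hne'
    have h0 : 0 < trInner M τ₀ := trInner_pos hpsd hne' hτ₀pd
    have hle : trInner M τ₀ ≤ sSup {y : ℝ | ∃ σ ∈ F, y = trInner M σ} :=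
      le_csSup (hYb M) ⟨τ₀, hτ₀F, rfl⟩
    linarith
  have hρle : ∀ M : Matrix (Fin n) (Fin n) ℂ, M.PosSemidef →
      trInner M ρ ≤ (1+r) * sSup {y : ℝ | ∃ σ ∈ F, y = trInner M σ} := by
    intro M hpsd
    have hτ₁ : trInner M ((1 + r)⁻¹ • (ρ + r • σ₁))
        ≤ sSup {y : ℝ | ∃ σ ∈ F, y = trInner M σ} :=
      le_csSup (hYb M) ⟨_, hτ₁F, rfl⟩
    rw [trInner_smul_right, trInner_add_right, trInner_smul_right] at hτ₁
    have hσ₁n : 0 ≤ trInner M σ₁ := trInner_nonneg hpsd hσ₁.1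
    have h2 : trInner M ρ + r * trInner M σ₁
        ≤ (1+r) * sSup {y : ℝ | ∃ σ ∈ F, y = trInner M σ} := by
      have h3 := mul_le_mul_of_nonneg_left hτ₁ h1r.le
      rwa [← mul_assoc, mul_inv_cancel₀ h1r.ne', one_mul] at h3
    nlinarith
  constructor
  · -- membership: construct an optimal M
    rcases eq_or_lt_of_le hr0 with hr0' | hrpos
    · -- r = 0 : use M = 1
      obtain rfl : r = 0 := hr0'.symm
      have i0 : Fin n := ⟨0, hn⟩
      have hone_ne : (1 : Matrix (Fin n) (Fin n) ℂ) ≠ 0 := by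
        intro h
        have := congrFun (congrFun h i0) i0
        simp [Matrix.one_apply_eq] at this
      refine ⟨1, Matrix.PosSemidef.one, hone_ne, ?_⟩
      have hval : ∀ τ : Matrix (Fin n) (Fin n) ℂ, τ.trace = 1 → trInner 1 τ = 1 := by
        intro τ hτ
        simp [trInner, Matrix.one_mul, hτ]
      have hsingle : {y : ℝ | ∃ σ ∈ F, y = trInner 1 σ} = {1} := by
        ext y
        constructor
        · rintro ⟨σ, hσ, rfl⟩
          simp [hval σ (hF σ hσ).2]
        · rintro rfl
          obtain ⟨τ, hτ⟩ := hne
          exact ⟨τ, hτ, (hval τ (hF τ hτ).2).symm⟩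
      rw [hsingle, csSup_singleton, hval ρ hρ.2]
      norm_num
    · -- r > 0
      set t : ℕ → ℝ := fun k => r - r * (1/(k+1)) with ht
      have ht0 : ∀ k : ℕ, 0 ≤ t k := by
        intro k
        have h1 : (1:ℝ)/(k+1) ≤ 1 := by
          rw [div_le_one (by positivity)]
          exact le_add_of_nonneg_left (Nat.cast_nonneg k)
        have := mul_le_of_le_one_right hr0 h1
        simp only [ht]
        linarith
      have htlt : ∀ k : ℕ, t k < r := by
        intro k
        have : 0 < r * (1/(k+1)) := by positivity
        simp only [ht]
        linarith
      have hmono : ∀ k : ℕ, t k ≤ t (k+1) := by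
        intro k
        have h1 : (1:ℝ)/(k+1+1) ≤ 1/(k+1) := by
          apply one_div_le_one_div_of_le (by positivity)
          push_cast; linarith
        have := mul_le_mul_of_nonneg_left h1 hr0
        simp only [ht]
        push_cast
        push_cast at this
        linarith
      set K : ℕ → Set (Matrix (Fin n) (Fin n) ℂ) := fun k =>
        {M | M.PosSemidef ∧ (M.trace).re = 1 ∧
          ∀ τ ∈ F, (1 + t k) * trInner M τ ≤ trInner M ρ} with hK
      have hKne : ∀ k, (K k).Nonempty := by
        intro k
        have hnotin : ρ ∉ (fun p : Matrix (Fin n) (Fin n) ℂ × Matrix (Fin n) (Fin n) ℂ =>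
            (1 + t k) • p.1 - t k • p.2) '' (F ×ˢ {σ | IsDensity σ}) := by
          rintro ⟨⟨τ, σ⟩, ⟨hτF, hσD⟩, heq⟩
          have h1tk : (1 + t k) ≠ 0 := by have := ht0 k; intro h; linarith [this]
          have hfeas : t k ∈ robSet F ρ := by
            refine ⟨ht0 k, σ, hσD, ?_⟩
            have heq' : (1 + t k) • τ - t k • σ = ρ := heq
            have hadd : ρ + t k • σ = (1 + t k) • τ := by
              rw [← heq', sub_add_cancel]
            rw [hadd, smul_smul, inv_mul_cancel₀ h1tk, one_smul]
            exact hτF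
          exact absurd (hr.2 hfeas) (not_le.mpr (htlt k))
        obtain ⟨M, h1, h2, h3⟩ := sep_step hne hcomp hconv hF hρ hn hnotin
        exact ⟨M, h1, h2, h3⟩
      have hKdec : ∀ k, K (k+1) ⊆ K k := by
        intro k M hM
        obtain ⟨h1, h2, h3⟩ := hM
        refine ⟨h1, h2, fun τ hτ => ?_⟩
        have hτn : 0 ≤ trInner M τ := trInner_nonneg h1 (hF τ hτ).1
        have := h3 τ hτ
        nlinarith [hmono k]
      have hKcl : ∀ k, IsClosed (K k) := by
        intro k
        have hc1 : IsClosed {M : Matrix (Fin n) (Fin n) ℂ | (M.trace).re = 1} :=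
          isClosed_eq (Complex.continuous_re.comp continuous_id.matrix_trace) continuous_const
        have hc2 : IsClosed {M : Matrix (Fin n) (Fin n) ℂ |
            ∀ τ ∈ F, (1 + t k) * trInner M τ ≤ trInner M ρ} := by
          have : {M : Matrix (Fin n) (Fin n) ℂ |
              ∀ τ ∈ F, (1 + t k) * trInner M τ ≤ trInner M ρ}
              = ⋂ τ ∈ F, {M | (1 + t k) * trInner M τ ≤ trInner M ρ} := by
            ext M; simp
          rw [this]
          exact isClosed_biInter fun τ _ =>
            isClosed_le (continuous_const.mul (continuous_trInner_left τ))
              (continuous_trInner_left ρ)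
        have hset : K k = {M : Matrix (Fin n) (Fin n) ℂ | M.PosSemidef}
            ∩ ({M : Matrix (Fin n) (Fin n) ℂ | (M.trace).re = 1}
              ∩ {M : Matrix (Fin n) (Fin n) ℂ |
                  ∀ τ ∈ F, (1 + t k) * trInner M τ ≤ trInner M ρ}) := by
          rw [hK]
          ext M
          simp only [Set.mem_setOf_eq, Set.mem_inter_iff]
          try tauto
        rw [hset]
        exact isClosed_posSemidef.inter (hc1.inter hc2)
      have hK0c : IsCompact (K 0) := by
        refine IsCompact.of_isClosed_subset isCompact_psd_trace_le_one (hKcl 0) ?_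
        rintro M ⟨h1, h2, -⟩
        exact ⟨h1, le_of_eq h2⟩
      obtain ⟨M, hM⟩ :=
        IsCompact.nonempty_iInter_of_sequence_nonempty_isCompact_isClosed K hKdec hKne hK0c hKcl
      simp only [Set.mem_iInter] at hM
      have hpsd : M.PosSemidef := (hM 0).1
      have htr1 : (M.trace).re = 1 := (hM 0).2.1
      have hne' : M ≠ 0 := by
        intro h0
        rw [h0] at htr1
        simp [Matrix.trace] at htr1
      have hlim : ∀ τ ∈ F, (1 + r) * trInner M τ ≤ trInner M ρ := by
        intro τ hτ
        have h1 : Filter.Tendsto (fun k : ℕ => (1:ℝ)/(k+1)) Filter.atTop (nhds 0) :=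
          tendsto_one_div_add_atTop_nhds_zero_nat
        have h2 : Filter.Tendsto t Filter.atTop (nhds r) := by
          have h3 := Filter.Tendsto.sub (tendsto_const_nhds (x := r)) (h1.const_mul r)
          simp only [mul_zero, sub_zero] at h3
          convert h3 using 2 with k
          try simp only [ht]
          try ring
        have h4 : Filter.Tendsto (fun k : ℕ => (1 + t k) * trInner M τ) Filter.atTop
            (nhds ((1 + r) * trInner M τ)) :=
          ((tendsto_const_nhds.add h2).mul_const _)
        exact le_of_tendsto h4 (Filter.Eventually.of_forall fun k => (hM k).2.2 τ hτ)
      have hsup : (1 + r) * sSup {y : ℝ | ∃ σ ∈ F, y = trInner M σ} ≤ trInner M ρ := by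
        have hs1 : sSup {y : ℝ | ∃ σ ∈ F, y = trInner M σ} ≤ trInner M ρ / (1 + r) := by
          refine csSup_le ⟨trInner M τ₀, τ₀, hτ₀F, rfl⟩ ?_
          rintro y ⟨τ, hτ, rfl⟩
          rw [le_div_iff₀ h1r]
          calc trInner M τ * (1 + r) = (1 + r) * trInner M τ := by ring
            _ ≤ trInner M ρ := hlim τ hτ
        calc (1 + r) * sSup {y : ℝ | ∃ σ ∈ F, y = trInner M σ}
            ≤ (1 + r) * (trInner M ρ / (1 + r)) := by
              exact mul_le_mul_of_nonneg_left hs1 h1r.le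
          _ = trInner M ρ := by field_simp
      have heq : trInner M ρ = (1 + r) * sSup {y : ℝ | ∃ σ ∈ F, y = trInner M σ} :=
        le_antisymm (hρle M hpsd) hsup
      refine ⟨M, hpsd, hne', ?_⟩
      rw [eq_div_iff (hspos M hpsd hne').ne']
      rw [heq]
      try ring
  · -- upper bound
    rintro x ⟨M, hpsd, hne', rfl⟩
    rw [div_le_iff₀ (hspos M hpsd hne')]
    calc trInner M ρ ≤ (1 + r) * sSup {y : ℝ | ∃ σ ∈ F, y = trInner M σ} := hρle M hpsd
      _ = (1 + r) * sSup {y : ℝ | ∃ σ ∈ F, y = trInner M σ} := rfl
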